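/- If x, y, q, k and n are positive integers with n and q prime, q ≥ 3, gcd(x,y) = 1, y odd, n ≥ 3, and x² − q^(2k) = y^n, then n divides q − 1 and there exists an odd positive integer X such that y = X(X+2) and (X+2)^n − X^n = 2 q^k. -/

import Mathlib

private lemma aux_three_pow (m : ℕ) : 2 * m + 1 ≤ 3 ^ m := by
  induction m with
  | zero => simp
  | succ i ih =>
    have : 3 ^ i ≥ 1 := Nat.one_le_pow _ _ (by norm_num)
    calc 2 * (i + 1) + 1 = (2 * i + 1) + 2 := by ring
    _ ≤ 3 ^ i + 2 := by omega
    _ ≤ 3 ^ (i + 1) := by rw [pow_succ]; omega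

set_option maxHeartbeats 1000000 in
theorem prime_power_gaps_even_odd_structure (x y q k n : ℕ)
    (hx : 0 < x) (hy : 0 < y) (hk : 0 < k)
    (hn : 3 ≤ n) (hnp : Nat.Prime n) (hqp : Nat.Prime q) (hq3 : 3 ≤ q)
    (hgcd : Nat.gcd x y = 1) (hyodd : Odd y)
    (heq : (x : ℤ) ^ 2 - (q : ℤ) ^ (2 * k) = (y : ℤ) ^ n) :
    n ∣ q - 1 ∧ ∃ X : ℕ, 0 < X ∧ Odd X ∧ y = X * (X + 2) ∧
      ((X : ℤ) + 2) ^ n - (X : ℤ) ^ n = 2 * (q : ℤ) ^ k := by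
  have hnodd : Odd n := hnp.odd_of_ne_two (by omega)
  have hn0 : n ≠ 0 := by omega
  have hqodd : Odd q := hqp.odd_of_ne_two (by omega)
  -- natural number version of the equation
  have hNat : x ^ 2 = y ^ n + (q ^ k) ^ 2 := by
    have : (x : ℤ) ^ 2 = (y : ℤ) ^ n + ((q : ℤ) ^ k) ^ 2 := by
      rw [← pow_mul, mul_comm k 2]; linarith
    exact_mod_cast this
  set Q := q ^ k with hQdef
  have hQ1 : 1 ≤ Q := Nat.one_le_pow _ _ (by omega)
  -- q does not divide y
  have hqy : ¬ q ∣ y := by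
    intro h
    have h1 : q ∣ x ^ 2 := by
      rw [hNat]
      exact Nat.dvd_add (dvd_pow h hn0) (dvd_pow (dvd_pow_self q (by omega)) (by omega))
    have h2 : q ∣ x := hqp.dvd_of_dvd_pow h1
    have : q ∣ Nat.gcd x y := Nat.dvd_gcd h2 h
    rw [hgcd] at this
    exact absurd (Nat.dvd_one.mp this) (by omega)
  -- x > Q
  have hQx : Q < x := by
    have h1 : Q ^ 2 < x ^ 2 := by
      have : 1 ≤ y ^ n := Nat.one_le_pow _ _ hy
      omega
    exact lt_of_pow_lt_pow_left₀ 2 (Nat.zero_le _) h1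
  -- product decomposition
  have hprod : (x - Q) * (x + Q) = y ^ n := by
    have h1 : ((x - Q : ℕ) : ℤ) * ((x + Q : ℕ) : ℤ) = (y : ℤ) ^ n := by
      rw [Nat.cast_sub hQx.le]
      push_cast
      have hQZ : ((Q : ℕ) : ℤ) = (q : ℤ) ^ k := by push_cast [hQdef]; ring
      rw [hQZ]
      linear_combination heq
    exact_mod_cast h1
  -- coprimality of the two factors
  have hcop : Nat.Coprime (x - Q) (x + Q) := by
    set g := Nat.gcd (x - Q) (x + Q) with hg
    have hg1 : g ∣ x - Q := Nat.gcd_dvd_left _ _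
    have hg2 : g ∣ x + Q := Nat.gcd_dvd_right _ _
    have hgyn' : g ∣ y ^ n := by rw [← hprod]; exact hg1.mul_right _
    have hgodd : Odd g := by
      rcases Nat.even_or_odd g with he | ho
      · exfalso
        have : 2 ∣ y ^ n := dvd_trans he.two_dvd hgyn'
        have : Even (y ^ n) := even_iff_two_dvd.mpr this
        exact (Nat.not_even_iff_odd.mpr (hyodd.pow)) this
      · exact ho
    have hg2x : g ∣ 2 * x := by
      have : (x - Q) + (x + Q) = 2 * x := by omega
      have h := Nat.dvd_add hg1 hg2
      rwa [this] at h
    have hgx : g ∣ x := Nat.Coprime.dvd_of_dvd_mul_left (hgodd.coprime_two_right) hg2x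
    have hcxy : Nat.Coprime x (y ^ n) := (Nat.coprime_iff_gcd_eq_one.mpr hgcd).pow_right n
    have : g ∣ Nat.gcd x (y ^ n) := Nat.dvd_gcd hgx hgyn'
    rw [hcxy] at this
    exact Nat.dvd_one.mp this
  -- extract n-th powers over ℤ
  have hcopZ : IsCoprime ((x - Q : ℕ) : ℤ) ((x + Q : ℕ) : ℤ) :=
    Nat.isCoprime_iff_coprime.mpr hcop
  have hprodZ : ((x - Q : ℕ) : ℤ) * ((x + Q : ℕ) : ℤ) = (y : ℤ) ^ n := by
    exact_mod_cast congrArg (Nat.cast : ℕ → ℤ) hprod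
  obtain ⟨⟨a, ha⟩, ⟨b, hb⟩⟩ := Int.eq_pow_of_mul_eq_pow_odd hcopZ hnodd hprodZ
  -- positivity of a and b
  have ha_pos : 0 < a := by
    by_contra h
    push_neg at h
    have : a ^ n ≤ 0 := hnodd.pow_nonpos h
    have h2 : (0 : ℤ) < ((x - Q : ℕ) : ℤ) := by
      have : 0 < x - Q := by omega
      exact_mod_cast this
    omega
  have hb_pos : 0 < b := by
    by_contra h
    push_neg at h
    have : b ^ n ≤ 0 := hnodd.pow_nonpos h
    have h2 : (0 : ℤ) < ((x + Q : ℕ) : ℤ) := by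
      have : 0 < x + Q := by omega
      exact_mod_cast this
    omega
  set A := a.toNat with hAdef
  set B := b.toNat with hBdef
  have hAa : (A : ℤ) = a := Int.toNat_of_nonneg ha_pos.le
  have hBb : (B : ℤ) = b := Int.toNat_of_nonneg hb_pos.le
  have hA1 : 1 ≤ A := by omega
  have hB1 : 1 ≤ B := by omega
  -- natural number versions
  have hAxQ : A ^ n = x - Q := by
    have : ((A : ℤ)) ^ n = ((x - Q : ℕ) : ℤ) := by rw [hAa, ← ha]
    exact_mod_cast this
  have hBxQ : B ^ n = x + Q := by
    have : ((B : ℤ)) ^ n = ((x + Q : ℕ) : ℤ) := by rw [hBb, ← hb]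
    exact_mod_cast this
  -- y = A * B
  have hyAB : y = A * B := by
    have h1 : (A * B) ^ n = y ^ n := by
      rw [mul_pow, hAxQ, hBxQ, hprod]
    exact (Nat.pow_left_injective (by omega) h1).symm
  have hAodd : Odd A := by
    rcases Nat.even_or_odd A with he | ho
    · exfalso; exact (Nat.not_even_iff_odd.mpr hyodd) (hyAB ▸ he.mul_right B)
    · exact ho
  have hBodd : Odd B := by
    rcases Nat.even_or_odd B with he | ho
    · exfalso; exact (Nat.not_even_iff_odd.mpr hyodd) (hyAB ▸ he.mul_left A)
    · exact ho
  have hqA : ¬ q ∣ A := fun h => hqy (hyAB ▸ h.mul_right B)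
  have hqB : ¬ q ∣ B := fun h => hqy (hyAB ▸ h.mul_left A)
  -- key equation
  have hkey : B ^ n = A ^ n + 2 * Q := by
    rw [hAxQ, hBxQ]; omega
  have hAB : A < B := by
    have : A ^ n < B ^ n := by omega
    exact lt_of_pow_lt_pow_left₀ n (Nat.zero_le _) this
  have hB3 : 3 ≤ B := by
    obtain ⟨i, hi⟩ := hAodd
    obtain ⟨j, hj⟩ := hBodd
    omega
  -- the geometric sum
  set S := ∑ i ∈ Finset.range n, B ^ i * A ^ (n - 1 - i) with hSdef
  have hSfac : (B - A) * S = 2 * Q := by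
    have hZ : ((B - A : ℕ) : ℤ) * (S : ℤ) = 2 * (Q : ℤ) := by
      have hgs := geom_sum₂_mul (B : ℤ) (A : ℤ) n
      have hScast : (S : ℤ) = ∑ i ∈ Finset.range n, (B : ℤ) ^ i * (A : ℤ) ^ (n - 1 - i) := by
        push_cast [hSdef]; ring
      rw [Nat.cast_sub hAB.le, hScast, mul_comm]
      rw [hgs]
      have : ((B : ℤ)) ^ n = ((A : ℤ)) ^ n + 2 * (Q : ℤ) := by exact_mod_cast hkey
      omega
    exact_mod_cast hZ
  -- lower bounds on S
  have hS_ge : B ^ (n - 1) + (n - 1) ≤ S := by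
    have hsplit : S = (∑ i ∈ Finset.range (n - 1), B ^ i * A ^ (n - 1 - i))
        + B ^ (n - 1) * A ^ (n - 1 - (n - 1)) := by
      rw [hSdef]
      rw [show n = (n - 1) + 1 by omega, Finset.sum_range_succ]
      congr 2 <;> omega
    have hterm : ∀ i ∈ Finset.range (n - 1), 1 ≤ B ^ i * A ^ (n - 1 - i) := by
      intro i _
      simpa using Nat.mul_le_mul (Nat.one_le_pow i B (by omega))
        (Nat.one_le_pow (n - 1 - i) A (by omega))
    have hsum : n - 1 ≤ ∑ i ∈ Finset.range (n - 1), B ^ i * A ^ (n - 1 - i) := by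
      calc n - 1 = ∑ _i ∈ Finset.range (n - 1), 1 := by simp
      _ ≤ _ := Finset.sum_le_sum hterm
    have hlast : B ^ (n - 1) * A ^ (n - 1 - (n - 1)) = B ^ (n - 1) := by
      simp
    omega
  -- q does not divide B - A
  have hqBA : ¬ q ∣ (B - A) := by
    intro hdvd
    have hLTE := Nat.emultiplicity_pow_sub_pow hqp hqodd hdvd hqB n
    have hBnAn : B ^ n - A ^ n = 2 * q ^ k := by omega
    have hmul2 : emultiplicity q (B ^ n - A ^ n) = (k : ℕ∞) := by
      rw [hBnAn, emultiplicity_mul hqp.prime, emultiplicity_pow_self_of_prime hqp.prime,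
        emultiplicity_eq_zero.mpr (fun h => by have := Nat.le_of_dvd two_pos h; omega), zero_add]
    rw [hmul2] at hLTE
    by_cases hqn : q ∣ n
    · -- then q = n, emultiplicity q n = 1
      have hqn' : q = n := ((Nat.prime_dvd_prime_iff_eq hqp hnp).mp hqn)
      have h1 : emultiplicity q n = 1 := by
        rw [hqn']
        simpa using emultiplicity_pow_self_of_prime hnp.prime 1
      rw [h1] at hLTE
      have hcast : (k : ℕ∞) = ((k - 1 : ℕ) : ℕ∞) + 1 := by
        exact_mod_cast (by omega : k = (k - 1) + 1)
      have hE : emultiplicity q (B - A) = ((k - 1 : ℕ) : ℕ∞) :=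
        WithTop.add_right_cancel (by simp : (1 : ℕ∞) ≠ ⊤) (hLTE.symm.trans hcast)
      have hdvd_pow : q ^ (k - 1) ∣ (B - A) :=
        pow_dvd_of_le_emultiplicity (le_of_eq hE.symm)
      -- size contradiction
      have hBA_ge : q ^ (k - 1) ≤ B - A := Nat.le_of_dvd (by omega) hdvd_pow
      have hS_ge2 : 2 * q + 1 ≤ S := by
        have h3 : 3 ^ (n - 1) ≤ B ^ (n - 1) := Nat.pow_le_pow_left hB3 _
        have h4 : 2 * (n - 1) + 1 ≤ 3 ^ (n - 1) := aux_three_pow (n - 1)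
        omega
      have : 2 * Q < (B - A) * S := by
        calc 2 * Q = 2 * q ^ k := by rw [hQdef]
        _ = 2 * (q ^ (k - 1) * q) := by rw [← pow_succ]; congr 2; omega
        _ < q ^ (k - 1) * (2 * q + 1) := by
            have h1 : 1 ≤ q ^ (k - 1) := Nat.one_le_pow _ _ (by omega)
            have h2 : q ^ (k - 1) * (2 * q + 1) = 2 * (q ^ (k - 1) * q) + q ^ (k - 1) := by ring
            omega
        _ ≤ (B - A) * S := Nat.mul_le_mul hBA_ge hS_ge2
      omega
    · -- emultiplicity q n = 0, so q^k ∣ B - A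
      have h0 : emultiplicity q n = 0 := emultiplicity_eq_zero.mpr hqn
      rw [h0, add_zero] at hLTE
      have hdvd_pow : q ^ k ∣ (B - A) := pow_dvd_of_le_emultiplicity (le_of_eq hLTE)
      have hBA_ge : q ^ k ≤ B - A := Nat.le_of_dvd (by omega) hdvd_pow
      have hS_ge3 : 3 ≤ S := by
        have h3 : 3 ^ (n - 1) ≤ B ^ (n - 1) := Nat.pow_le_pow_left hB3 _
        have : 1 ≤ 3 ^ (n - 1) := Nat.one_le_pow _ _ (by norm_num)
        omega
      have : 2 * Q < (B - A) * S := by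
        calc 2 * Q = 2 * q ^ k := by rw [hQdef]
        _ < q ^ k * 3 := by
            have : 1 ≤ q ^ k := Nat.one_le_pow _ _ (by omega)
            omega
        _ ≤ (B - A) * S := Nat.mul_le_mul hBA_ge hS_ge3
      omega
  -- B - A divides 2
  have hBA2 : B = A + 2 := by
    have hdvd2Q : (B - A) ∣ 2 * Q := ⟨S, hSfac.symm⟩
    have hcopq : Nat.Coprime (B - A) (q ^ k) :=
      ((hqp.coprime_iff_not_dvd).mpr hqBA).symm.pow_right k
    have hdvd2 : (B - A) ∣ 2 := (Nat.Coprime.dvd_of_dvd_mul_right hcopq) (hQdef ▸ hdvd2Q)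
    have h12 : B - A = 1 ∨ B - A = 2 := (Nat.dvd_prime Nat.prime_two).mp hdvd2
    obtain ⟨i, hi⟩ := hAodd
    obtain ⟨j, hj⟩ := hBodd
    omega
  -- conclusion: n ∣ q - 1
  haveI : Fact q.Prime := ⟨hqp⟩
  have hABZmod : ¬ ((A : ZMod q) = 0) := by
    rw [ZMod.natCast_eq_zero_iff]
    exact hqA
  have hBZmod : ¬ ((B : ZMod q) = 0) := by
    rw [ZMod.natCast_eq_zero_iff]
    exact hqB
  have hndvd : n ∣ q - 1 := by
    set t : ZMod q := (B : ZMod q) * (A : ZMod q)⁻¹ with htdef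
    have ht0 : t ≠ 0 := mul_ne_zero hBZmod (inv_ne_zero hABZmod)
    have hpowqn : (B : ZMod q) ^ n = (A : ZMod q) ^ n := by
      have : ((B ^ n : ℕ) : ZMod q) = ((A ^ n + 2 * Q : ℕ) : ZMod q) := by
        exact_mod_cast congrArg (Nat.cast : ℕ → ZMod q) hkey
      push_cast [hQdef] at this
      rw [ZMod.natCast_self, zero_pow (by omega : k ≠ 0)] at this
      simpa using this
    have htn : t ^ n = 1 := by
      rw [htdef, mul_pow, hpowqn, inv_pow, mul_inv_cancel₀ (pow_ne_zero n hABZmod)]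
    have htne1 : t ≠ 1 := by
      intro h1
      have hBA' : (B : ZMod q) = (A : ZMod q) := by
        have := congrArg (· * (A : ZMod q)) h1
        simpa [htdef, mul_assoc, inv_mul_cancel₀ hABZmod] using this
      rw [hBA2] at hBA'
      push_cast at hBA'
      have h2 : ((2 : ℕ) : ZMod q) = 0 := by
        push_cast
        linear_combination hBA'
      rw [ZMod.natCast_eq_zero_iff] at h2
      have := Nat.le_of_dvd two_pos h2
      omega
    have hord_n : orderOf t = n := by
      have h1 : orderOf t ∣ n := orderOf_dvd_of_pow_eq_one htn
      rcases (Nat.Prime.eq_one_or_self_of_dvd hnp _ h1) with h | h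
      · exact absurd (orderOf_eq_one_iff.mp h) htne1
      · exact h
    have hq1 : t ^ (q - 1) = 1 := ZMod.pow_card_sub_one_eq_one ht0
    have := orderOf_dvd_of_pow_eq_one hq1
    rwa [hord_n] at this
  refine ⟨hndvd, A, by omega, hAodd, by rw [hyAB, hBA2], ?_⟩
  have : ((B : ℤ)) ^ n = ((A : ℤ)) ^ n + 2 * (q : ℤ) ^ k := by
    have := hkey
    rw [hQdef] at this
    exact_mod_cast this
  rw [hBA2] at this
  push_cast at this ⊢
  linarith
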